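/- Let V' be the 8×8 integer matrix [[0,0,0,0,0,0,0,1],[1,1,-1,0,0,0,0,0],[0,0,0,1,0,0,0,1],[0,0,0,-1,0,0,0,0],[0,0,0,-1,0,0,0,0],[0,0,0,0,-1,1,0,0],[0,0,0,0,1,0,-1,1],[1,0,0,0,1,0,0,2]], set Γ' = -V'·(V'ᵗ - V')⁻¹, and let A' = Γ'³ - (Γ' - I)³. Then the cokernel of A', viewed as a map ℤ⁸ → ℤ⁸, is isomorphic as an abelian group to ℤ/49ℤ ⊕ ℤ/49ℤ. -/

import Mathlib

open Matrix

/-- The diagonal entries of the Smith normal form. -/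
abbrev dnK : Fin 8 → ℕ := ![1,1,1,1,1,1,49,49]

/-- inverse of `V'ᵀ - V'` -/
def Wm : Matrix (Fin 8) (Fin 8) ℤ :=
  !![0,-1,0,1,0,1,0,0; 1,0,0,0,0,0,0,0; 0,0,0,1,0,1,0,0; -1,0,-1,0,0,1,1,0;
     0,0,0,0,0,1,0,0; -1,0,-1,-1,-1,0,0,1; 0,0,0,-1,0,0,0,1; 0,0,0,0,0,-1,-1,0]

/-- the matrix `A' = Γ'³ - (Γ'-1)³` -/
def Em : Matrix (Fin 8) (Fin 8) ℤ :=
  !![4,0,3,0,3,0,0,0; 0,1,0,0,0,-3,-3,0; 0,0,1,0,0,3,3,0; 3,0,3,1,3,-3,-3,0;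
     3,0,3,0,4,-3,-3,0; -3,-3,-3,3,0,10,3,0; 3,3,3,-3,0,-3,4,0; 0,0,3,-3,0,-3,-3,7]

def Pm : Matrix (Fin 8) (Fin 8) ℤ :=
  !![0,1,0,0,0,0,0,0; 0,0,1,0,0,0,0,0; 0,0,-3,1,0,0,0,0; 1,0,-3,0,0,0,0,0;
     3,3,3,-3,0,0,-1,0; 188,189,183,-186,-1,0,-63,1;
     9149,9198,8904,-9051,-49,1,-3065,49; 4579,4599,4467,-4536,-20,-10,-1543,21]

def Pm' : Matrix (Fin 8) (Fin 8) ℤ :=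
  !![0,3,0,1,0,0,0,0; 1,0,0,0,0,0,0,0; 0,1,0,0,0,0,0,0; 0,3,1,0,0,0,0,0;
     0,3,0,-1,0,-511,10,1; -3,-3,3,-3,22,-49,1,0; 3,3,-3,3,-1,0,0,0;
     0,3,-3,0,-63,-510,10,1]

def Qm : Matrix (Fin 8) (Fin 8) ℤ :=
  !![0,0,0,1,0,219,-210,-21; 1,0,0,0,9,-21,21,0; 0,1,0,0,-9,21,-21,0;
     0,0,1,0,9,198,-189,-21; 0,0,0,-1,9,-313,301,28; 0,0,0,0,-2,5,-5,0;
     0,0,0,0,5,-12,12,0; 0,0,0,0,0,0,1,-2]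

def Qm' : Matrix (Fin 8) (Fin 8) ℤ :=
  !![0,1,0,0,0,-3,-3,0; 0,0,1,0,0,3,3,0; 3,0,0,1,3,-12,-12,0; 4,0,0,0,3,-9,-9,0;
     0,0,0,0,0,12,5,0; 2,0,0,0,2,729,288,7; 2,0,0,0,2,724,286,7; 1,0,0,0,1,362,143,3]

def Dm : Matrix (Fin 8) (Fin 8) ℤ := Matrix.diagonal (fun i => (dnK i : ℤ))

lemma coker_equiv_of_snf {n : ℕ} (A P P' D Q Q' : Matrix (Fin n) (Fin n) ℤ)
    (hP'P : P' * P = 1) (hPP' : P * P' = 1) (hQ'Q : Q' * Q = 1)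
    (hA : A = P' * D * Q') :
    Nonempty (((Fin n → ℤ) ⧸ LinearMap.range (Matrix.toLin' A)) ≃ₗ[ℤ]
      ((Fin n → ℤ) ⧸ LinearMap.range (Matrix.toLin' D))) := by
  let e : (Fin n → ℤ) ≃ₗ[ℤ] (Fin n → ℤ) :=
    LinearEquiv.ofLinear (Matrix.toLin' P') (Matrix.toLin' P)
      (by rw [← Matrix.toLin'_mul, hP'P, Matrix.toLin'_one])
      (by rw [← Matrix.toLin'_mul, hPP', Matrix.toLin'_one])
  have hsur : LinearMap.range (Matrix.toLin' Q') = ⊤ := by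
    rw [LinearMap.range_eq_top]
    intro y
    exact ⟨Matrix.toLin' Q y, by
      rw [← Matrix.toLin'_mul_apply, hQ'Q, Matrix.toLin'_one, LinearMap.id_apply]⟩
  have hr : LinearMap.range (Matrix.toLin' A) =
      Submodule.map (Matrix.toLin' P') (LinearMap.range (Matrix.toLin' D)) := by
    rw [hA, Matrix.toLin'_mul, LinearMap.range_comp, hsur, Submodule.map_top,
      Matrix.toLin'_mul, LinearMap.range_comp]
  have hmap : (LinearMap.range (Matrix.toLin' D)).map e.toLinearMap
      = LinearMap.range (Matrix.toLin' A) := by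
    rw [hr]
    ext x
    constructor <;> rintro ⟨y, hy, rfl⟩ <;> exact ⟨y, hy, by rfl⟩
  exact ⟨(Submodule.Quotient.equiv _ _ e hmap).symm⟩

lemma range_diagonal {n : ℕ} (d : Fin n → ℤ) :
    LinearMap.range (Matrix.toLin' (Matrix.diagonal d)) =
      Submodule.pi Set.univ (fun i => Ideal.span {d i}) := by
  ext y
  simp only [LinearMap.mem_range, Submodule.mem_pi, Set.mem_univ, forall_true_left,
    Ideal.mem_span_singleton, Matrix.toLin'_apply]
  constructor
  · rintro ⟨x, rfl⟩ i
    exact ⟨x i, Matrix.mulVec_diagonal d x i⟩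
  · intro h
    refine ⟨fun i => (h i).choose, funext fun i => ?_⟩
    rw [Matrix.mulVec_diagonal]
    exact ((h i).choose_spec).symm

instance : Subsingleton (ZMod 1) := inferInstanceAs (Subsingleton (Fin 1))

/-- the last step: a pi type over `ZMod (dnK i)` is just `ZMod 49 × ZMod 49`. -/
def lastEquiv : (∀ i : Fin 8, ZMod (dnK i)) ≃+ ZMod 49 × ZMod 49 where
  toFun f := (f 6, f 7)
  invFun z :=
    Fin.cons 0 <| Fin.cons 0 <| Fin.cons 0 <| Fin.cons 0 <| Fin.cons 0 <| Fin.cons 0 <|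
      Fin.cons z.1 <| Fin.cons z.2 finZeroElim
  left_inv f := by
    funext i
    fin_cases i <;> first | exact Subsingleton.elim (α := ZMod 1) _ _ | rfl
  right_inv z := rfl
  map_add' f g := rfl

/-- For the Seifert matrix V' of K' = D'₄(2), with Γ' = -V'(V'ᵗ-V')⁻¹ and
A' = Γ'³ - (Γ'-I)³, the cokernel of A' : ℤ⁸ → ℤ⁸ is isomorphic to ℤ/49 ⊕ ℤ/49. -/
theorem homology_threefold_cover_K' :
    let V' : Matrix (Fin 8) (Fin 8) ℤ :=
      !![0,0,0,0,0,0,0,1;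
         1,1,-1,0,0,0,0,0;
         0,0,0,1,0,0,0,1;
         0,0,0,-1,0,0,0,0;
         0,0,0,-1,0,0,0,0;
         0,0,0,0,-1,1,0,0;
         0,0,0,0,1,0,-1,1;
         1,0,0,0,1,0,0,2]
    let Γ' : Matrix (Fin 8) (Fin 8) ℤ := -V' * (V'ᵀ - V')⁻¹
    let A' : Matrix (Fin 8) (Fin 8) ℤ := Γ' ^ 3 - (Γ' - 1) ^ 3
    Nonempty (((Fin 8 → ℤ) ⧸ LinearMap.range (Matrix.toLin' A')) ≃+
      (ZMod 49 × ZMod 49)) := by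
  intro V' Γ' A'
  have hA : A' = Em := by
    have h1 : (V'ᵀ - V')⁻¹ = Wm := Matrix.inv_eq_right_inv (by decide)
    show (-V' * (V'ᵀ - V')⁻¹) ^ 3 - (-V' * (V'ᵀ - V')⁻¹ - 1) ^ 3 = Em
    rw [h1]
    show (-V' * Wm) ^ 3 - (-V' * Wm - 1) ^ 3 = Em
    decide
  rw [hA]
  obtain ⟨e1⟩ := coker_equiv_of_snf Em Pm Pm' Dm Qm Qm'
    (by decide) (by decide) (by decide) (by decide)
  have e2 := Submodule.quotEquivOfEq _ _ (range_diagonal (fun i => (dnK i : ℤ)))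
  have e3 := Submodule.quotientPi
    (fun i : Fin 8 => (Ideal.span {((dnK i : ℤ))} : Submodule ℤ ℤ))
  have e4 := AddEquiv.piCongrRight
    (fun i : Fin 8 => (Int.quotientSpanNatEquivZMod (dnK i)).toAddEquiv)
  exact ⟨e1.toAddEquiv.trans <| e2.toAddEquiv.trans <| e3.toAddEquiv.trans <|
    e4.trans lastEquiv⟩
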